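/- Normalization (unweighted case, w_j = 1 for all j, so d̃ = d̄ := d + (Σ − d)/(d−1)): for every α ≥ 0, every achievement matrix y, and every poverty cutoff k with 0 < k ≤ d̄, one has 0 ≤ FGT_α(y; z) ≤ 1; the value 1 is attained at the all-zeros achievement matrix and the value 0 is attained at any achievement matrix x with x_{ij} > z_j for all i, j. -/
import Mathlib


open Finset

/-- Deprivation gap `r_{ij}^α` for an achievement row `y` (convention `0 ^ (0:ℝ) = 1`). -/
noncomputable def gap {d : ℕ} (z y : Fin d → ℝ) (α : ℝ) (j : Fin d) : ℝ :=
  if y j ≤ z j then ((z j - y j) / z j) ^ α else 0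

/-- Network-adjusted deprivation `D_{ij}^α`. -/
noncomputable def Dnet {d : ℕ} (M : Fin d → Fin d → ℝ) (z y : Fin d → ℝ) (α : ℝ)
    (j : Fin d) : ℝ :=
  gap z y α j + (1 / ((d : ℝ) - 1)) * ∑ j' ∈ Finset.univ.erase j, M j j' * gap z y α j'

/-- Sum `Σ_j` of the `j`-th column of `M`. -/
noncomputable def colSum {d : ℕ} (M : Fin d → Fin d → ℝ) (j : Fin d) : ℝ := ∑ j', M j' j

/-- Weighted deprivation count `D_i = Σ_j w_j D_{ij}^0`. -/
noncomputable def Dcount {d : ℕ} (M : Fin d → Fin d → ℝ) (z w y : Fin d → ℝ) : ℝ :=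
  ∑ j, w j * Dnet M z y 0 j

/-- Dual-cutoff identification function `ρ_k`. -/
noncomputable def rho {d : ℕ} (M : Fin d → Fin d → ℝ) (z w : Fin d → ℝ) (k : ℝ)
    (y : Fin d → ℝ) : ℝ :=
  if k ≤ Dcount M z w y then 1 else 0

/-- Network-adjusted FGT measure with normalizing constant `dt`. -/
noncomputable def FGT {N d : ℕ} (M : Fin d → Fin d → ℝ) (z w : Fin d → ℝ) (k α dt : ℝ)
    (y : Fin N → Fin d → ℝ) : ℝ :=
  (1 / ((N : ℝ) * dt)) * ∑ i, ∑ j, w j * Dnet M z (y i) α j * rho M z w k (y i)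

lemma gap_nonneg' {d : ℕ} (z y : Fin d → ℝ) (α : ℝ) (j : Fin d) (hz : 0 < z j) :
    0 ≤ gap z y α j := by
  unfold gap; split_ifs with h
  · exact Real.rpow_nonneg (div_nonneg (by linarith) hz.le) _
  · exact le_refl 0

lemma gap_le_one' {d : ℕ} (z y : Fin d → ℝ) (α : ℝ) (j : Fin d) (hz : 0 < z j)
    (hy : 0 ≤ y j) (hα : 0 ≤ α) : gap z y α j ≤ 1 := by
  unfold gap; split_ifs with h
  · exact Real.rpow_le_one (div_nonneg (by linarith) hz.le)
      (by rw [div_le_one hz]; linarith) hα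
  · exact zero_le_one

lemma Dnet_nonneg' {d : ℕ} (M : Fin d → Fin d → ℝ) (z y : Fin d → ℝ) (α : ℝ) (j : Fin d)
    (hz : ∀ j, 0 < z j) (hM0 : ∀ j j', 0 ≤ M j j') (hd : 2 ≤ d) :
    0 ≤ Dnet M z y α j := by
  have hc : (0:ℝ) ≤ 1 / ((d:ℝ) - 1) := by
    have h2 : (2:ℝ) ≤ (d:ℝ) := by exact_mod_cast hd
    exact one_div_nonneg.mpr (by linarith)
  refine add_nonneg (gap_nonneg' z y α j (hz j)) (mul_nonneg hc ?_)
  exact Finset.sum_nonneg fun j' _ => mul_nonneg (hM0 j j') (gap_nonneg' z y α j' (hz j'))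

/-- pointwise bound on `Dnet` by the gap-free quantity. -/
lemma Dnet_le' {d : ℕ} (M : Fin d → Fin d → ℝ) (z y : Fin d → ℝ) (α : ℝ) (j : Fin d)
    (hz : ∀ j, 0 < z j) (hy : ∀ j, 0 ≤ y j) (hα : 0 ≤ α)
    (hM0 : ∀ j j', 0 ≤ M j j') (hd : 2 ≤ d) :
    Dnet M z y α j ≤ 1 + (1 / ((d:ℝ) - 1)) * ∑ j' ∈ Finset.univ.erase j, M j j' := by
  have hc : (0:ℝ) ≤ 1 / ((d:ℝ) - 1) := by
    have h2 : (2:ℝ) ≤ (d:ℝ) := by exact_mod_cast hd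
    exact one_div_nonneg.mpr (by linarith)
  refine add_le_add (gap_le_one' z y α j (hz j) (hy j) hα) (mul_le_mul_of_nonneg_left ?_ hc)
  refine Finset.sum_le_sum fun j' _ => ?_
  calc M j j' * gap z y α j' ≤ M j j' * 1 :=
        mul_le_mul_of_nonneg_left (gap_le_one' z y α j' (hz j') (hy j') hα) (hM0 j j')
    _ = M j j' := mul_one _

lemma sum_bound' {d : ℕ} (M : Fin d → Fin d → ℝ) (hMdiag : ∀ j, M j j = 1) (hd : 2 ≤ d) :
    ∑ j, (1 + (1 / ((d:ℝ) - 1)) * ∑ j' ∈ Finset.univ.erase j, M j j')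
      = (d : ℝ) + ((∑ j, ∑ j', M j j') - (d : ℝ)) / ((d : ℝ) - 1) := by
  have herase : ∀ j : Fin d, ∑ j' ∈ Finset.univ.erase j, M j j'
      = (∑ j', M j j') - 1 := by
    intro j
    rw [Finset.sum_erase_eq_sub (Finset.mem_univ j), hMdiag j]
  rw [Finset.sum_add_distrib, Finset.sum_const, ← Finset.mul_sum]
  simp only [herase, Finset.sum_sub_distrib, Finset.sum_const, Finset.card_univ,
    Fintype.card_fin, nsmul_eq_mul, mul_one, smul_eq_mul]
  ring

/-- normalization — `0 ≤ FGT_α(y; z) ≤ 1`, with `1` attained at the all-zeros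
matrix and `0` at any matrix whose entries all exceed the cutoffs. -/
theorem FGT_normalized
    (d : ℕ) (hd : 2 ≤ d) (z : Fin d → ℝ) (hz : ∀ j, 0 < z j)
    (M : Fin d → Fin d → ℝ) (hM0 : ∀ j j', 0 ≤ M j j') (hM1 : ∀ j j', M j j' ≤ 1)
    (hMdiag : ∀ j, M j j = 1)
    (db : ℝ) (hdb : db = (d : ℝ) + ((∑ j, ∑ j', M j j') - (d : ℝ)) / ((d : ℝ) - 1))
    (k : ℝ) (hk0 : 0 < k) (hk1 : k ≤ db) (α : ℝ) (hα : 0 ≤ α)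
    (N : ℕ) (hN : 1 ≤ N) :
    (∀ y : Fin N → Fin d → ℝ, (∀ i j, 0 ≤ y i j) →
      0 ≤ FGT M z (fun _ => 1) k α db y ∧ FGT M z (fun _ => 1) k α db y ≤ 1) ∧
    FGT M z (fun _ => 1) k α db (fun (_ : Fin N) (_ : Fin d) => (0 : ℝ)) = 1 ∧
    (∀ x : Fin N → Fin d → ℝ, (∀ i j, z j < x i j) →
      FGT M z (fun _ => 1) k α db x = 0) := by
  have hd2 : (2:ℝ) ≤ (d:ℝ) := by exact_mod_cast hd
  have hN1 : (1:ℝ) ≤ (N:ℝ) := by exact_mod_cast hN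
  have hSig : (d:ℝ) ≤ ∑ j, ∑ j', M j j' := by
    calc (d:ℝ) = ∑ j : Fin d, (1:ℝ) := by simp
      _ ≤ ∑ j, ∑ j', M j j' := by
          refine Finset.sum_le_sum fun j _ => ?_
          rw [← hMdiag j]
          exact Finset.single_le_sum (fun j' _ => hM0 j j') (Finset.mem_univ j)
  have hdbpos : 0 < db := by
    rw [hdb]
    have : 0 ≤ ((∑ j, ∑ j', M j j') - (d:ℝ)) / ((d:ℝ) - 1) := by
      apply div_nonneg <;> linarith
    linarith
  have hNdb : 0 < (N:ℝ) * db := mul_pos (by linarith) hdbpos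
  have hrow : ∀ (y : Fin d → ℝ), (∀ j, 0 ≤ y j) → ∑ j, Dnet M z y α j ≤ db := by
    intro y hy
    calc ∑ j, Dnet M z y α j
        ≤ ∑ j, (1 + (1 / ((d:ℝ) - 1)) * ∑ j' ∈ Finset.univ.erase j, M j j') :=
          Finset.sum_le_sum fun j _ => Dnet_le' M z y α j hz hy hα hM0 hd
      _ = db := by rw [sum_bound' M hMdiag hd, hdb]
  have hrho01 : ∀ (y : Fin d → ℝ), rho M z (fun _ => 1) k y = 0 ∨ rho M z (fun _ => 1) k y = 1 := by
    intro y; unfold rho; split_ifs <;> simp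
  refine ⟨?_, ?_, ?_⟩
  · intro y hy
    constructor
    · apply mul_nonneg (le_of_lt (by rw [one_div]; exact inv_pos.mpr hNdb))
      refine Finset.sum_nonneg fun i _ => Finset.sum_nonneg fun j _ => ?_
      have h1 : 0 ≤ Dnet M z (y i) α j := Dnet_nonneg' M z (y i) α j hz hM0 hd
      have h2 : 0 ≤ rho M z (fun _ => 1) k (y i) := by
        rcases hrho01 (y i) with h | h <;> rw [h] <;> norm_num
      simp only [one_mul]
      exact mul_nonneg h1 h2
    · have hinner : ∀ i, ∑ j, (fun _ : Fin d => (1:ℝ)) j * Dnet M z (y i) α j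
          * rho M z (fun _ => 1) k (y i) ≤ db := by
        intro i
        rcases hrho01 (y i) with h | h
        · simp [h]
          exact hdbpos.le
        · simp only [h, mul_one, one_mul]
          exact hrow (y i) (hy i)
      unfold FGT
      rw [div_mul_eq_mul_div, one_mul, div_le_one hNdb]
      calc ∑ i, ∑ j, (fun _ : Fin d => (1:ℝ)) j * Dnet M z (y i) α j
            * rho M z (fun _ => 1) k (y i)
          ≤ ∑ _i : Fin N, db := Finset.sum_le_sum fun i _ => hinner i
        _ = (N:ℝ) * db := by simp [mul_comm]
  · -- all-zeros matrix attains 1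
    have hgap : ∀ (β : ℝ) (j : Fin d), gap z (fun _ => (0:ℝ)) β j = 1 := by
      intro β j
      unfold gap
      rw [if_pos (hz j).le]
      rw [sub_zero, div_self (hz j).ne', Real.one_rpow]
    have hDnet : ∀ (β : ℝ) (j : Fin d), Dnet M z (fun _ => (0:ℝ)) β j
        = 1 + (1 / ((d:ℝ) - 1)) * ∑ j' ∈ Finset.univ.erase j, M j j' := by
      intro β j
      unfold Dnet
      rw [hgap]
      congr 1
      · congr 1
        exact Finset.sum_congr rfl fun j' _ => by rw [hgap, mul_one]
    have hsumD : ∀ β : ℝ, ∑ j, Dnet M z (fun _ => (0:ℝ)) β j = db := by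
      intro β
      simp only [hDnet]
      rw [sum_bound' M hMdiag hd, hdb]
    have hDc : Dcount M z (fun _ => 1) (fun _ => (0:ℝ)) = db := by
      unfold Dcount
      simp only [one_mul]
      exact hsumD 0
    have hrho : rho M z (fun _ => 1) k (fun _ => (0:ℝ)) = 1 := by
      unfold rho
      rw [if_pos (hDc ▸ hk1)]
    unfold FGT
    simp only [hrho, mul_one, one_mul]
    rw [Finset.sum_congr rfl fun (i : Fin N) _ => hsumD α, Finset.sum_const,
      Finset.card_univ, Fintype.card_fin, nsmul_eq_mul]
    field_simp
  · intro x hx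
    have hgap : ∀ i (j : Fin d), gap z (x i) α j = 0 := by
      intro i j
      unfold gap
      rw [if_neg (not_le.mpr (hx i j))]
    have hDnet : ∀ i (j : Fin d), Dnet M z (x i) α j = 0 := by
      intro i j
      unfold Dnet
      simp [hgap i]
    unfold FGT
    simp [hDnet]
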